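/- The linear orders L_i (i ∈ ℤ) are pairwise non-isomorphic: for all integers i ≠ j, there is no order isomorphism between L_i and L_j. -/

import Mathlib

open Ordinal Set

instance (priority := 2000) toType_isWellOrder (o : Ordinal) : IsWellOrder o.ToType (· < ·) :=
  isWellOrder_lt

noncomputable def itype {α : Type} [LinearOrder α] (z x : α) : Ordinal :=
  @dite _ (WellFoundedLT (Set.Ico z x)) (Classical.dec _)
    (fun h => letI := h;
      Ordinal.type ((· < ·) : (Set.Ico z x) → (Set.Ico z x) → Prop))
    (fun _ => 0)

lemma itype_eq_of_iso {α : Type} [LinearOrder α] {z x : α} {o : Ordinal}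
    (f : (Set.Ico z x) ≃o o.ToType) : itype z x = o := by
  have h : WellFoundedLT (Set.Ico z x) := f.toRelIsoLT.toRelEmbedding.isWellFounded
  unfold itype
  rw [dif_pos h]
  letI := h
  haveI hwo : IsWellOrder o.ToType (· < ·) := isWellOrder_lt
  have h2 : Ordinal.type ((· < ·) : (Set.Ico z x) → _ → Prop)
      = Ordinal.type ((· < ·) : o.ToType → _ → Prop) := Ordinal.type_eq.2 ⟨f.toRelIsoLT⟩
  rw [h2, Ordinal.type_toType]

lemma itype_congr {α β : Type} [LinearOrder α] [LinearOrder β] {z x : α} {z' x' : β}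
    (f : Set.Ico z x ≃o Set.Ico z' x') : itype z x = itype z' x' := by
  have hwf : WellFoundedLT (Set.Ico z x) ↔ WellFoundedLT (Set.Ico z' x') := by
    constructor
    · intro h; letI := h; exact f.symm.toRelIsoLT.toRelEmbedding.isWellFounded
    · intro h; letI := h; exact f.toRelIsoLT.toRelEmbedding.isWellFounded
  unfold itype
  by_cases h : WellFoundedLT (Set.Ico z x)
  · rw [dif_pos h, dif_pos (hwf.1 h)]
    letI := h; letI := hwf.1 h
    exact Ordinal.type_eq.2 ⟨f.toRelIsoLT⟩
  · rw [dif_neg h, dif_neg (fun h' => h (hwf.2 h'))]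

lemma itype_map {α β : Type} [LinearOrder α] [LinearOrder β] (f : α ≃o β) (z x : α) :
    itype z x = itype (f z) (f x) := by
  refine itype_congr (RelIso.mk (Equiv.subtypeEquiv f.toEquiv ?_) ?_)
  · intro w; simp [Set.mem_Ico, f.le_iff_le, f.lt_iff_lt]
  · rintro ⟨w, hw⟩ ⟨w', hw'⟩; simp [f.le_iff_le]

/-- Exponent of the `j`-th term (from the right, counting from `j = 0`) of `L i`. -/
def e (i : ℤ) (j : ℕ) : ℕ := ((j : ℤ) + 1 + max i 0).toNat

/-- Coefficient of the `j`-th term (from the right, counting from `j = 0`) of `L i`. -/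
def c (i : ℤ) (j : ℕ) : ℕ := ((j : ℤ) + 1 + max (-i) 0).toNat

/-- The order `L i = … + c₂·ω^{e₂} + c₁·ω^{e₁} + c₀·ω^{e₀} + ω^ω`: an
`ω*`-indexed sum of ordinals followed on the right by a copy of `ω^ω`. -/
abbrev L (i : ℤ) : Type :=
  ((Lex (Σ j : ℕ, (Ordinal.ToType (ω ^ (e i j) * (c i j)))ᵒᵈ))ᵒᵈ) ⊕ₗ Ordinal.ToType (ω ^ ω)

namespace Lproof

variable {i : ℤ}

/-- the `j`-th block, as an ordinal. -/
def Bo (i : ℤ) (k : ℕ) : Ordinal := ω ^ (e i k) * (c i k)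

lemma Bo_opow (i : ℤ) (k : ℕ) : Bo i k = ω ^ (e i k : Ordinal) * (c i k) := by
  rw [Bo, opow_natCast]

def blk (i : ℤ) (k : ℕ) (b : Ordinal.ToType (ω ^ (e i k) * (c i k))) : L i :=
  toLex (Sum.inl (OrderDual.toDual (toLex ⟨k, OrderDual.toDual b⟩)))

def rt (i : ℤ) (v : Ordinal.ToType (ω ^ (ω : Ordinal))) : L i :=
  toLex (Sum.inr v)

@[simp] lemma toLex_sigma_fst {ι : Type*} {α : ι → Type*} (x : Σ i, α i) :
    (toLex x).fst = x.fst := rfl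

@[simp] lemma toLex_sigma_snd {ι : Type*} {α : ι → Type*} (x : Σ i, α i) :
    (toLex x).snd = x.snd := rfl

lemma cases_L (w : L i) : (∃ k b, w = blk i k b) ∨ (∃ v, w = rt i v) := by
  rcases h : ofLex w with a | v
  · have hw : w = toLex (Sum.inl a) := by rw [← h]; rfl
    rcases hσ : ofLex (OrderDual.ofDual a) with ⟨k, b⟩
    refine Or.inl ⟨k, OrderDual.ofDual b, ?_⟩
    rw [hw, blk,
      show a = OrderDual.toDual (toLex (ofLex (OrderDual.ofDual a))) from rfl, hσ]
    rfl
  · exact Or.inr ⟨v, by rw [rt, ← h]; rfl⟩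

lemma blk_le_blk_same {k : ℕ} {b b'} : blk i k b ≤ blk i k b' ↔ b ≤ b' := by
  simp [blk, Sum.Lex.inl_le_inl_iff, Sigma.Lex.le_def, OrderDual.toDual_le_toDual]
  exact OrderDual.toDual_le_toDual

lemma blk_lt_blk_same {k : ℕ} {b b'} : blk i k b < blk i k b' ↔ b < b' := by
  simp [blk, Sum.Lex.inl_lt_inl_iff, Sigma.Lex.lt_def, OrderDual.toDual_lt_toDual]
  exact OrderDual.toDual_lt_toDual

lemma blk_lt_blk_of_lt {k k' : ℕ} {b b'} (h : k' < k) : blk i k b < blk i k' b' := by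
  rw [blk, blk, Sum.Lex.inl_lt_inl_iff, OrderDual.toDual_lt_toDual, Sigma.Lex.lt_def]
  exact Or.inl h

lemma le_block_index {k k' : ℕ} {b b'} (h : blk i k b ≤ blk i k' b') : k' ≤ k := by
  by_contra hk
  exact absurd h (not_le.2 (blk_lt_blk_of_lt (not_le.1 hk)))

lemma blk_lt_rt {k : ℕ} {b v} : blk i k b < rt i v :=
  Sum.Lex.inl_lt_inr _ _

lemma rt_le_rt {v v'} : rt i v ≤ rt i v' ↔ v ≤ v' :=
  Sum.Lex.inr_le_inr_iff

lemma rt_lt_rt {v v'} : rt i v < rt i v' ↔ v < v' :=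
  Sum.Lex.inr_lt_inr_iff

lemma not_rt_le_blk {k : ℕ} {b v} : ¬ (rt i v ≤ blk i k b) :=
  Sum.Lex.not_inr_le_inl


-- arithmetic facts about e and c
lemma e_cast (i : ℤ) (k : ℕ) : (e i k : ℤ) = k + 1 + max i 0 := by
  have h := le_max_right i 0
  rw [e]; omega

lemma c_cast (i : ℤ) (k : ℕ) : (c i k : ℤ) = k + 1 + max (-i) 0 := by
  have h := le_max_right (-i) 0
  rw [c]; omega

lemma max_sub_max (i : ℤ) : max i 0 - max (-i) 0 = i := by
  rcases le_total i 0 with h | h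
  · rw [max_eq_right h, max_eq_left (by omega)]; omega
  · rw [max_eq_left h, max_eq_right (by omega)]; omega

lemma e_succ (i : ℤ) (k : ℕ) : e i (k + 1) = e i k + 1 := by
  have h1 := e_cast i k; have h2 := e_cast i (k + 1); omega

lemma e_add (i : ℤ) (k d : ℕ) : e i (k + d) = e i k + d := by
  have h1 := e_cast i k; have h2 := e_cast i (k + d); omega

lemma e_mono (i : ℤ) {k k' : ℕ} (h : k ≤ k') : e i k ≤ e i k' := by
  have h1 := e_cast i k; have h2 := e_cast i k'; omega

lemma c_pos (i : ℤ) (k : ℕ) : 0 < c i k := by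
  have h := le_max_right (-i) 0
  have h1 := c_cast i k; omega

lemma c_eq (i : ℤ) (k : ℕ) : (c i k : ℤ) = (e i k : ℤ) - i := by
  have h1 := e_cast i k; have h2 := c_cast i k; have h3 := max_sub_max i; omega

lemma Bo_pos (i : ℤ) (k : ℕ) : 0 < Bo i k := by
  rw [Bo_opow]
  exact mul_pos (opow_pos _ omega0_pos) (by exact_mod_cast Nat.cast_pos.2 (c_pos i k))

-- typein into toType
noncomputable def iot (o : Ordinal) (x : o.ToType) : Ordinal :=
  Ordinal.typein (α := o.ToType) (· < ·) x

lemma iot_lt (o : Ordinal) (x : o.ToType) : iot o x < o := by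
  have := typein_lt_type ((· < ·) : o.ToType → o.ToType → Prop) x
  rwa [type_toType] at this

lemma iot_lt_iot {o : Ordinal} {x y : o.ToType} : iot o x < iot o y ↔ x < y := by
  unfold iot; exact typein_lt_typein _

lemma iot_le_iot {o : Ordinal} {x y : o.ToType} (h : x ≤ y) : iot o x ≤ iot o y := by
  rcases eq_or_lt_of_le h with rfl | h
  · exact le_rfl
  · exact (iot_lt_iot.2 h).le

lemma iot_surj {o o' : Ordinal} (h : o' < o) : ∃ x : o.ToType, iot o x = o' := by
  have : o' < type ((· < ·) : o.ToType → o.ToType → Prop) := by rwa [type_toType]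
  exact typein_surj _ this

-- the partial sums of blocks: S i k q = Bo i k + Bo i (k-1) + … + Bo i (k-q+1)
def S (i : ℤ) : ℕ → ℕ → Ordinal
  | _, 0 => 0
  | k, (q+1) => Bo i k + S i (k-1) q

@[simp] lemma S_zero (i : ℤ) (k : ℕ) : S i k 0 = 0 := rfl

lemma S_succ (i : ℤ) (k q : ℕ) : S i k (q+1) = Bo i k + S i (k-1) q := rfl

lemma S_app (i : ℤ) : ∀ (q : ℕ) {k : ℕ}, q ≤ k → S i k (q+1) = S i k q + Bo i (k - q)
  | 0, k, _ => by simp [S_succ]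
  | (q+1), k, h => by
    rw [S_succ, S_app i q (by omega : q ≤ k - 1), ← add_assoc, ← S_succ,
      show k - 1 - q = k - (q+1) from by omega]

lemma S_le_S (i : ℤ) {k q q' : ℕ} (h : q ≤ q') (h' : q' ≤ k + 1) : S i k q ≤ S i k q' := by
  induction q' with
  | zero => simp [Nat.le_zero.1 h]
  | succ n ih =>
    rcases Nat.lt_or_ge q (n+1) with hq | hq
    · calc S i k q ≤ S i k n := ih (by omega) (by omega)
        _ ≤ S i k (n+1) := by rw [S_app i n (by omega)]; exact le_add_right le_rfl
    · have : q = n + 1 := by omega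
      simp [this]

lemma S_bound (i : ℤ) : ∀ (q : ℕ) {k : ℕ}, q ≤ k + 1 → S i k q < ω ^ ((e i k : Ordinal) + 1)
  | 0, k, _ => opow_pos _ omega0_pos
  | (q+1), k, h => by
    have hrest : S i (k-1) q < ω ^ (e i k : Ordinal) := by
      rcases Nat.eq_zero_or_pos k with rfl | hk
      · have hq : q = 0 := by omega
        rw [hq, S_zero]
        exact opow_pos _ omega0_pos
      · have h1 : S i (k-1) q < ω ^ ((e i (k-1) : Ordinal) + 1) := S_bound i q (by omega)
        have h2 : e i (k-1) + 1 = e i k := by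
          have h3 := e_succ i (k-1)
          rw [show k - 1 + 1 = k from by omega] at h3
          exact h3.symm
        have h4 : ((e i (k-1) : Ordinal) + 1) = (e i k : Ordinal) := by
          rw [← h2]; push_cast; ring
        rwa [h4] at h1
    calc S i k (q+1) = Bo i k + S i (k-1) q := S_succ _ _ _
      _ < ω ^ (e i k : Ordinal) * (c i k) + ω ^ (e i k : Ordinal) := by
          rw [Bo_opow]; exact add_lt_add_right hrest _
      _ = ω ^ (e i k : Ordinal) * (c i k + 1) := by rw [mul_add, mul_one]
      _ ≤ ω ^ (e i k : Ordinal) * ω := by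
          refine mul_le_mul_right ?_ _
          have : ((c i k : ℕ) : Ordinal) + 1 = ((c i k + 1 : ℕ) : Ordinal) := by push_cast; ring
          rw [this]
          exact (nat_lt_omega0 _).le
      _ = ω ^ ((e i k : Ordinal) + 1) := by rw [opow_add, opow_one]

-- bottom element of each block
noncomputable def bot0 (i : ℤ) (k : ℕ) : Ordinal.ToType (ω ^ (e i k) * (c i k)) :=
  (iot_surj (o := Bo i k) (Bo_pos i k)).choose

lemma iot_bot0 (i : ℤ) (k : ℕ) :
    iot (Bo i k) (bot0 i k) = 0 :=
  (iot_surj (o := Bo i k) (Bo_pos i k)).choose_spec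

noncomputable def zmin (i : ℤ) (K : ℕ) : L i := blk i K (bot0 i K)

lemma iot_lt_Bo {k : ℕ} (b : Ordinal.ToType (ω ^ (e i k) * (c i k))) :
    iot (Bo i k) b < Bo i k :=
  iot_lt _ b

lemma zmin_le_blk {K k : ℕ} {b} : zmin i K ≤ blk i k b ↔ k ≤ K := by
  constructor
  · intro h; exact le_block_index h
  · intro h
    rcases Nat.lt_or_ge K k with h' | h'
    · omega
    · rcases Nat.eq_or_lt_of_le h with rfl | h''
      · rw [zmin, blk_le_blk_same]
        have h0 := iot_bot0 i k
        by_contra hb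
        have := iot_lt_iot (o := Bo i k) (x := b) (y := bot0 i k)
        rw [h0] at this
        exact absurd (this.2 (lt_of_not_ge hb)) (not_lt_zero (a := iot (Bo i k) b))
      · exact (blk_lt_blk_of_lt h'').le

lemma zmin_le_rt {K : ℕ} {v} : zmin i K ≤ rt i v := blk_lt_rt.le

-- the key coordinate map
noncomputable def F (i : ℤ) (K : ℕ) : L i → Ordinal := fun w =>
  match ofLex w with
  | Sum.inl a =>
      S i K (K - (ofLex (OrderDual.ofDual a)).1) +
        iot _ (OrderDual.ofDual (ofLex (OrderDual.ofDual a)).2)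
  | Sum.inr v => S i K (K+1) + iot _ v

@[simp] lemma F_blk {K k : ℕ} {b} :
    F i K (blk i k b) = S i K (K - k) + iot (Bo i k) b := rfl

@[simp] lemma F_rt {K : ℕ} {v} :
    F i K (rt i v) = S i K (K+1) + iot (ω ^ (ω : Ordinal)) v := rfl

lemma F_zmin {K : ℕ} : F i K (zmin i K) = 0 := by
  rw [zmin, F_blk, iot_bot0, Nat.sub_self, S_zero, add_zero]

lemma F_blk_lt {K k : ℕ} (hk : k ≤ K) (b) :
    F i K (blk i k b) < S i K (K - k + 1) := by
  rw [F_blk, S_app i (K - k) (by omega), show K - (K - k) = k from by omega]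
  exact add_lt_add_right (iot_lt_Bo b) _

lemma F_lt_total {K : ℕ} {w : L i} (h : zmin i K ≤ w) :
    F i K w < S i K (K+1) + ω ^ (ω : Ordinal) := by
  rcases cases_L w with ⟨k, b, rfl⟩ | ⟨v, rfl⟩
  · have hk : k ≤ K := zmin_le_blk.1 h
    calc F i K (blk i k b) < S i K (K - k + 1) := F_blk_lt hk b
      _ ≤ S i K (K+1) := S_le_S i (by omega) (by omega)
      _ ≤ S i K (K+1) + ω ^ (ω : Ordinal) := le_add_right le_rfl
  · rw [F_rt]
    exact add_lt_add_right (iot_lt _ v) _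

lemma F_lt_F {K : ℕ} {w w' : L i} (h : zmin i K ≤ w) (h' : zmin i K ≤ w')
    (hww : w < w') : F i K w < F i K w' := by
  rcases cases_L w with ⟨k, b, rfl⟩ | ⟨v, rfl⟩ <;>
    rcases cases_L w' with ⟨k', b', rfl⟩ | ⟨v', rfl⟩
  · have hk : k ≤ K := zmin_le_blk.1 h
    have hk' : k' ≤ K := zmin_le_blk.1 h'
    have hkk : k' ≤ k := le_block_index hww.le
    rcases Nat.eq_or_lt_of_le hkk with rfl | hlt
    · have hbb : b < b' := blk_lt_blk_same.1 hww
      exact add_lt_add_right (iot_lt_iot.2 hbb) _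
    · calc F i K (blk i k b) < S i K (K - k + 1) := F_blk_lt hk b
        _ ≤ S i K (K - k') := S_le_S i (by omega) (by omega)
        _ ≤ F i K (blk i k' b') := le_add_right le_rfl
  · have hk : k ≤ K := zmin_le_blk.1 h
    calc F i K (blk i k b) < S i K (K - k + 1) := F_blk_lt hk b
      _ ≤ S i K (K + 1) := S_le_S i (by omega) (by omega)
      _ ≤ F i K (rt i v') := le_add_right le_rfl
  · exact absurd hww (not_lt.2 blk_lt_rt.le)
  · exact add_lt_add_right (iot_lt_iot.2 (rt_lt_rt.1 hww)) _

lemma F_le_F {K : ℕ} {w w' : L i} (h : zmin i K ≤ w) (h' : zmin i K ≤ w')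
    (hww : w ≤ w') : F i K w ≤ F i K w' := by
  rcases eq_or_lt_of_le hww with rfl | hlt
  · exact le_rfl
  · exact (F_lt_F h h' hlt).le

lemma sub_lt_of_lt_add {a b d : Ordinal} (h : a < b + d) (hb : b ≤ a) : a - b < d := by
  by_contra hc
  have : b + d ≤ b + (a - b) := add_le_add_right (not_lt.1 hc) _
  rw [Ordinal.add_sub_cancel_of_le hb] at this
  exact absurd h (not_lt.2 this)

lemma loc (i : ℤ) (K : ℕ) : ∀ (q : ℕ) (o : Ordinal), o < S i K q →
    ∃ p, p < q ∧ S i K p ≤ o ∧ o < S i K (p+1)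
  | 0, o, h => absurd h (by simp)
  | (q+1), o, h => by
    rcases lt_or_ge o (S i K q) with h' | h'
    · obtain ⟨p, hp1, hp2, hp3⟩ := loc i K q o h'
      exact ⟨p, by omega, hp2, hp3⟩
    · exact ⟨q, by omega, h', h⟩

lemma F_surj {K : ℕ} {o : Ordinal} (h : o < S i K (K+1) + ω ^ (ω : Ordinal)) :
    ∃ w : L i, zmin i K ≤ w ∧ F i K w = o := by
  rcases lt_or_ge o (S i K (K+1)) with h1 | h1
  · obtain ⟨p, hp1, hp2, hp3⟩ := loc i K (K+1) o h1
    have hpK : p ≤ K := by omega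
    set k := K - p with hk
    have hKk : K - k = p := by omega
    rw [S_app i p (by omega)] at hp3
    have hsub : o - S i K p < Bo i (K - p) := sub_lt_of_lt_add hp3 hp2
    obtain ⟨b, hb⟩ := iot_surj (o := Bo i k) (by rwa [← hk] at hsub)
    refine ⟨blk i k b, zmin_le_blk.2 (by omega), ?_⟩
    show S i K (K - k) + iot (Bo i k) b = o
    rw [hKk, hb, Ordinal.add_sub_cancel_of_le hp2]
  · have hsub : o - S i K (K+1) < ω ^ (ω : Ordinal) := sub_lt_of_lt_add h h1
    obtain ⟨v, hv⟩ := iot_surj hsub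
    refine ⟨rt i v, zmin_le_rt, ?_⟩
    rw [F_rt, hv, Ordinal.add_sub_cancel_of_le h1]

lemma core {K : ℕ} {z x : L i} (hz : zmin i K ≤ z) (hzx : z ≤ x) :
    itype z x = F i K x - F i K z := by
  have hx : zmin i K ≤ x := hz.trans hzx
  set a := F i K z with ha
  set b := F i K x with hb
  have hab : a ≤ b := F_le_F hz hx hzx
  apply itype_eq_of_iso (o := b - a)
  have hmem : ∀ w : Set.Ico z x, F i K w - a ∈ Set.Iio (b - a) := by
    rintro ⟨w, hw1, hw2⟩
    have hwz : zmin i K ≤ w := hz.trans hw1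
    have h1 : a ≤ F i K w := F_le_F hz hwz hw1
    have h2 : F i K w < b := F_lt_F hwz hx hw2
    have : a + (F i K w - a) < a + (b - a) := by
      rwa [Ordinal.add_sub_cancel_of_le h1, Ordinal.add_sub_cancel_of_le hab]
    exact lt_of_add_lt_add_left this
  refine StrictMono.orderIsoOfSurjective
    (fun w => ToType.mk (o := b - a) ⟨F i K w - a, hmem w⟩) ?_ ?_
  · rintro ⟨w, hw1, hw2⟩ ⟨w', hw1', hw2'⟩ hlt
    apply (ToType.mk (o := b - a)).strictMono
    have hwz : zmin i K ≤ w := hz.trans hw1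
    have hwz' : zmin i K ≤ w' := hz.trans hw1'
    have h1 : a ≤ F i K w := F_le_F hz hwz hw1
    have h1' : a ≤ F i K w' := F_le_F hz hwz' hw1'
    have h2 : F i K w < F i K w' := F_lt_F hwz hwz' hlt
    have : a + (F i K w - a) < a + (F i K w' - a) := by
      rwa [Ordinal.add_sub_cancel_of_le h1, Ordinal.add_sub_cancel_of_le h1']
    exact Subtype.mk_lt_mk.2 (lt_of_add_lt_add_left this)
  · intro t
    set o' := ((ToType.mk (o := b - a)).symm t : Ordinal) with ho'
    have ho'lt : o' < b - a := ((ToType.mk (o := b - a)).symm t).2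
    have hao' : a + o' < b := by
      have := add_lt_add_right ho'lt a
      rwa [Ordinal.add_sub_cancel_of_le hab] at this
    obtain ⟨w, hw1, hw2⟩ := F_surj (K := K) (hao'.trans_le (F_lt_total hx).le)
    have hzw : z ≤ w := by
      by_contra hc
      have hlt := F_lt_F hw1 hz (lt_of_not_ge hc)
      rw [hw2] at hlt
      exact absurd (le_add_right (le_refl a) : a ≤ a + o') (not_le.2 hlt)
    have hwx : w < x := by
      by_contra hc
      have hle := F_le_F hx hw1 (not_lt.1 hc)
      rw [hw2] at hle
      exact absurd hao' (not_lt.2 hle)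
    refine ⟨⟨w, hzw, hwx⟩, ?_⟩
    have hsub2 : (⟨F i K w - a, hmem ⟨w, hzw, hwx⟩⟩ : Set.Iio (b - a))
        = (ToType.mk (o := b - a)).symm t :=
      Subtype.ext (show F i K w - a = ((ToType.mk (o := b - a)).symm t : Ordinal) by
        rw [hw2, Ordinal.add_sub_cancel])
    show ToType.mk (o := b - a) ⟨F i K w - a, _⟩ = t
    rw [hsub2, OrderIso.apply_symm_apply]

lemma sub_le_sub_right' {a b d : Ordinal} (h : a ≤ b) : a - d ≤ b - d := by
  rw [Ordinal.sub_le]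
  exact h.trans (le_add_sub b d)

lemma gap {E β : Ordinal} {C : ℕ} (hβ : β < ω ^ E * C) : ω ^ E ≤ ω ^ E * C - β := by
  have hne : (ω ^ E) ≠ 0 := (opow_pos E omega0_pos).ne'
  have hq : β / ω ^ E < (C : Ordinal) := (Ordinal.div_lt hne).2 hβ
  have hmod : β % ω ^ E < ω ^ E := mod_lt β hne
  have key : β + ω ^ E ≤ ω ^ E * C := by
    have h1 : β + ω ^ E = ω ^ E * (β / ω ^ E) + (β % ω ^ E + ω ^ E) := by
      rw [← add_assoc, Ordinal.div_add_mod]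
    rw [h1, add_omega0_opow hmod, ← mul_succ]
    exact mul_le_mul_right (Order.succ_le_of_lt hq) _
  calc ω ^ E = (β + ω ^ E) - β := by rw [Ordinal.add_sub_cancel]
    _ ≤ ω ^ E * C - β := sub_le_sub_right' key

lemma EX (i : ℤ) : ∃ x : L i, ∀ a : ℕ, e i 1 ≤ a → ∃ z : L i, z ≤ x ∧
    ω ^ (a : Ordinal) * ((((a : ℤ) - i).toNat : ℕ) : Ordinal) ≤ itype z x ∧
    itype z x < ω ^ (a : Ordinal) * (((((a : ℤ) - i).toNat : ℕ) : Ordinal) + 1) := by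
  refine ⟨zmin i 0, ?_⟩
  intro a ha
  set jj := 1 + (a - e i 1) with hjj
  have hejj : e i jj = a := by
    rw [hjj]
    have h1 := e_add i 1 (a - e i 1); omega
  have hjj1 : 1 ≤ jj := by omega
  have hle : zmin i jj ≤ zmin i 0 := zmin_le_blk.2 (Nat.zero_le _)
  have hit : itype (zmin i jj) (zmin i 0) = S i jj jj := by
    rw [core (K := jj) le_rfl hle, F_zmin, Ordinal.sub_zero]
    show F i jj (blk i 0 (bot0 i 0)) = S i jj jj
    rw [F_blk, iot_bot0, Nat.sub_zero, add_zero]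
  have hm : c i jj = ((a : ℤ) - i).toNat := by
    have h1 := c_eq i jj; omega
  have hunfold : S i jj jj = Bo i jj + S i (jj - 1) (jj - 1) := by
    rw [show jj = (jj - 1) + 1 from by omega, S_succ]
    congr 2 <;> omega
  have hrest : S i (jj - 1) (jj - 1) < ω ^ (a : Ordinal) := by
    have h1 := S_bound i (jj - 1) (k := jj - 1) (by omega)
    have h2 : ((e i (jj - 1) : Ordinal) + 1) = ((a : ℕ) : Ordinal) := by
      have h3 := e_succ i (jj - 1)
      rw [show jj - 1 + 1 = jj from by omega] at h3
      rw [show ((e i (jj-1) : Ordinal)) = ((e i (jj-1) : ℕ) : Ordinal) from rfl]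
      rw [show ((a : ℕ) : Ordinal) = ((e i (jj-1) + 1 : ℕ) : Ordinal) from by rw [← h3, hejj]]
      push_cast; ring
    rwa [h2] at h1
  have hBo : Bo i jj = ω ^ (a : Ordinal) * ((((a : ℤ) - i).toNat : ℕ) : Ordinal) := by
    rw [Bo_opow, hm, hejj]
  refine ⟨zmin i jj, hle, ?_, ?_⟩
  · rw [hit, hunfold, hBo]
    exact le_add_right le_rfl
  · rw [hit, hunfold, hBo, mul_add, mul_one]
    exact add_lt_add_right hrest _

lemma NE_aux {j : ℤ} {x : L j} {a J : ℕ} (hJ1 : 1 ≤ J) (heJ : e j J = a)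
    (hx_min : ∀ k', J ≤ k' → zmin j k' ≤ x)
    (hFx : F j J x < Bo j J + ω ^ (a : Ordinal)) :
    ∀ z : L j, z ≤ x →
      itype z x < ω ^ (a : Ordinal) * (((((a : ℤ) - j).toNat : ℕ) : Ordinal) + 1) ∨
      ω ^ ((a : Ordinal) + 1) ≤ itype z x := by
  have hm : c j J = ((a : ℤ) - j).toNat := by
    have h1 := c_eq j J; omega
  have hBo : Bo j J + ω ^ (a : Ordinal)
      = ω ^ (a : Ordinal) * (((((a : ℤ) - j).toNat : ℕ) : Ordinal) + 1) := by
    rw [Bo_opow, hm, heJ, mul_add, mul_one]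
  intro z hzx
  have bound_case : zmin j J ≤ z →
      itype z x < ω ^ (a : Ordinal) * (((((a : ℤ) - j).toNat : ℕ) : Ordinal) + 1) := by
    intro hz
    rw [core (K := J) hz hzx, ← hBo]
    exact (Ordinal.sub_le_self _ _).trans_lt hFx
  rcases cases_L z with ⟨k, b, rfl⟩ | ⟨v', rfl⟩
  · rcases Nat.lt_or_ge J k with hk | hk
    · -- gap case : k ≥ J + 1
      right
      have hz : zmin j k ≤ blk j k b := zmin_le_blk.2 le_rfl
      rw [core (K := k) hz hzx]
      have hFz : F j k (blk j k b) = iot (Bo j k) b := by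
        rw [F_blk, Nat.sub_self, S_zero, zero_add]
      have hxk : zmin j k ≤ x := hz.trans hzx
      have hmin : zmin j k ≤ zmin j (k - 1) := zmin_le_blk.2 (by omega)
      have hxmin : zmin j (k - 1) ≤ x := hx_min (k - 1) (by omega)
      have hFmin : F j k (zmin j (k - 1)) = Bo j k := by
        rw [zmin, F_blk, iot_bot0, add_zero, show k - (k - 1) = 1 from by omega,
          S_succ, S_zero, add_zero]
      have hFxk : Bo j k ≤ F j k x := by
        rw [← hFmin]
        exact F_le_F hmin hxk hxmin
      have h1 : Bo j k - iot (Bo j k) b ≤ F j k x - F j k (blk j k b) := by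
        rw [hFz]
        exact sub_le_sub_right' hFxk
      have h2 : ω ^ ((e j k : ℕ) : Ordinal) ≤ Bo j k - iot (Bo j k) b := by
        have hb := iot_lt_Bo b
        set β := iot (Bo j k) b with hβ
        rw [Bo_opow] at hb ⊢
        exact gap hb
      have h3 : ω ^ ((a : Ordinal) + 1) ≤ ω ^ ((e j k : ℕ) : Ordinal) := by
        apply opow_le_opow_right omega0_pos
        have h4 : a + 1 ≤ e j k := by
          have h5 := e_mono j (show J + 1 ≤ k from hk)
          have h6 := e_succ j J
          omega
        have : (((a + 1 : ℕ)) : Ordinal) ≤ ((e j k : ℕ) : Ordinal) := by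
          exact_mod_cast Nat.cast_le.2 h4
        calc (a : Ordinal) + 1 = ((a + 1 : ℕ) : Ordinal) := by push_cast; ring
          _ ≤ _ := this
      exact h3.trans (h2.trans h1)
    · exact Or.inl (bound_case (zmin_le_blk.2 hk))
  · exact Or.inl (bound_case zmin_le_rt)

lemma NE (j : ℤ) (x : L j) : ∃ A : ℕ, ∀ a : ℕ, A ≤ a → ∀ z : L j, z ≤ x →
    itype z x < ω ^ (a : Ordinal) * (((((a : ℤ) - j).toNat : ℕ) : Ordinal) + 1) ∨
    ω ^ ((a : Ordinal) + 1) ≤ itype z x := by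
  rcases cases_L x with ⟨k0, bx, rfl⟩ | ⟨v, rfl⟩
  · refine ⟨e j (k0 + 2), fun a ha z hz => ?_⟩
    set J := (k0 + 2) + (a - e j (k0 + 2)) with hJ
    have heJ : e j J = a := by
      rw [hJ]
      have h1 := e_add j (k0 + 2) (a - e j (k0 + 2)); omega
    have hJk0 : k0 + 2 ≤ J := by omega
    refine NE_aux (by omega) heJ (fun k' hk' => zmin_le_blk.2 (by omega)) ?_ z hz
    -- F j J (blk j k0 bx) < Bo j J + ω ^ a
    have h1 : F j J (blk j k0 bx) < S j J (J - k0 + 1) := F_blk_lt (by omega) bx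
    have h2 : S j J (J - k0 + 1) = Bo j J + S j (J - 1) (J - k0) := S_succ _ _ _
    have h3 : S j (J - 1) (J - k0) < ω ^ (a : Ordinal) := by
      have h4 := S_bound j (J - k0) (k := J - 1) (by omega)
      have h5 : ((e j (J - 1) : Ordinal) + 1) = ((a : ℕ) : Ordinal) := by
        have h6 := e_succ j (J - 1)
        rw [show J - 1 + 1 = J from by omega] at h6
        rw [show ((a : ℕ) : Ordinal) = ((e j (J-1) + 1 : ℕ) : Ordinal) from by rw [← h6, heJ]]
        push_cast; ring
      rwa [h5] at h4
    calc F j J (blk j k0 bx) < S j J (J - k0 + 1) := h1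
      _ = Bo j J + S j (J - 1) (J - k0) := h2
      _ < Bo j J + ω ^ (a : Ordinal) := add_lt_add_right h3 _
  · obtain ⟨N, hN⟩ : ∃ N : ℕ, iot (ω ^ (ω : Ordinal)) v < ω ^ ((N : ℕ) : Ordinal) := by
      have h0 := iot_lt (ω ^ (ω : Ordinal)) v
      rcases (lt_opow_of_isSuccLimit omega0_ne_zero isSuccLimit_omega0).1 h0 with ⟨b, hb, hlt⟩
      obtain ⟨n, rfl⟩ := lt_omega0.1 hb
      exact ⟨n, hlt⟩
    refine ⟨max (e j 1) (N + 1), fun a ha z hz => ?_⟩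
    set J := 1 + (a - e j 1) with hJ
    have haN : N + 1 ≤ a := le_trans (le_max_right _ _) ha
    have ha1 : e j 1 ≤ a := le_trans (le_max_left _ _) ha
    have heJ : e j J = a := by
      rw [hJ]
      have h1 := e_add j 1 (a - e j 1); omega
    refine NE_aux (by omega) heJ (fun k' hk' => zmin_le_rt) ?_ z hz
    -- F j J (rt j v) < Bo j J + ω ^ a
    have h2 : S j J (J + 1) = Bo j J + S j (J - 1) J := S_succ _ _ _
    have h3 : S j (J - 1) J < ω ^ (a : Ordinal) := by
      have h4 := S_bound j J (k := J - 1) (by omega)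
      have h5 : ((e j (J - 1) : Ordinal) + 1) = ((a : ℕ) : Ordinal) := by
        have h6 := e_succ j (J - 1)
        rw [show J - 1 + 1 = J from by omega] at h6
        rw [show ((a : ℕ) : Ordinal) = ((e j (J-1) + 1 : ℕ) : Ordinal) from by rw [← h6, heJ]]
        push_cast; ring
      rwa [h5] at h4
    have h6 : iot (ω ^ (ω : Ordinal)) v < ω ^ (a : Ordinal) := by
      refine hN.trans_le (opow_le_opow_right omega0_pos ?_)
      exact_mod_cast Nat.cast_le.2 (show N ≤ a from by omega)
    calc F j J (rt j v) = S j J (J + 1) + iot (ω ^ (ω : Ordinal)) v := F_rt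
      _ = Bo j J + (S j (J - 1) J + iot (ω ^ (ω : Ordinal)) v) := by rw [h2, add_assoc]
      _ < Bo j J + ω ^ (a : Ordinal) :=
          add_lt_add_right (principal_add_omega0_opow _ h3 h6) _

lemma KEY {i j : ℤ} (hij : i < j) (f : L i ≃o L j) : False := by
  obtain ⟨x, hx⟩ := EX i
  obtain ⟨A, hA⟩ := NE j (f x)
  set a := max (e i 1) (max A (j.toNat + 1)) with haa
  obtain ⟨z, hzx, hlow, hhigh⟩ := hx a (le_max_left _ _)
  have htr : itype (f z) (f x) = itype z x := (itype_map f z x).symm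
  have hfz : f z ≤ f x := f.le_iff_le.2 hzx
  have haA : A ≤ a := le_trans (le_max_left _ _) (le_max_right _ _)
  have haj : j.toNat + 1 ≤ a := le_trans (le_max_right _ _) (le_max_right _ _)
  rcases hA a haA (f z) hfz with hc1 | hc2
  · rw [htr] at hc1
    have hlt := hlow.trans_lt hc1
    rw [mul_lt_mul_iff_right₀ (opow_pos _ omega0_pos)] at hlt
    have hnat : ((a : ℤ) - i).toNat < ((a : ℤ) - j).toNat + 1 := by
      have : ((((a : ℤ) - i).toNat : ℕ) : Ordinal.{0})
          < ((((((a : ℤ) - j).toNat : ℕ)) + 1 : ℕ) : Ordinal.{0}) := by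
        push_cast
        exact_mod_cast hlt
      exact_mod_cast this
    omega
  · rw [htr] at hc2
    have hup : itype z x < ω ^ ((a : Ordinal) + 1) := by
      refine hhigh.trans_le ?_
      have h1 : (((((a : ℤ) - i).toNat : ℕ) : Ordinal) + 1) ≤ ω := by
        have : (((((a : ℤ) - i).toNat + 1 : ℕ)) : Ordinal) ≤ ω := (nat_lt_omega0 _).le
        rw [show (((((a : ℤ) - i).toNat : ℕ) : Ordinal) + 1)
          = (((((a : ℤ) - i).toNat + 1 : ℕ)) : Ordinal) from by push_cast; ring]
        exact this
      calc ω ^ (a : Ordinal) * (((((a : ℤ) - i).toNat : ℕ) : Ordinal) + 1)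
          ≤ ω ^ (a : Ordinal) * ω := mul_le_mul_right h1 _
        _ = ω ^ ((a : Ordinal) + 1) := by rw [opow_add, opow_one]
    exact absurd hc2 (not_le.2 hup)

end Lproof

/-- The orders `L i` are pairwise non-isomorphic. -/
theorem L_pairwise_not_orderIso : ∀ i j : ℤ, i ≠ j → IsEmpty (L i ≃o L j) := by
  intro i j hne
  constructor
  intro f
  rcases hne.lt_or_gt with h | h
  · exact Lproof.KEY h f
  · exact Lproof.KEY h f.symm
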